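/- Let (λ_k)_{k≥0} be scalars in a field of characteristic zero satisfying (j·λ_k − k·λ_j)·λ_{j+k} = (j−k)·λ_j·λ_k for all j,k ≥ 1. Let N = min{j ≥ 1 : λ_j ≠ 0} (assuming it exists). Then for every i ≥ 1 not divisible by N, λ_i = 0. -/
import Mathlib


theorem stmt_8 (K : Type*) [Field K] [CharZero K] (lam : ℕ → K)
    (hpre : ∀ j k : ℕ, 1 ≤ j → 1 ≤ k →
      ((j : K) * lam k - (k : K) * lam j) * lam (j + k)
        = ((j : K) - (k : K)) * lam j * lam k)
    (N : ℕ) (hN1 : 1 ≤ N) (hNne : lam N ≠ 0)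
    (hNmin : ∀ j : ℕ, 1 ≤ j → j < N → lam j = 0) :
    ∀ i : ℕ, 1 ≤ i → ¬ N ∣ i → lam i = 0 := by
  intro i
  induction i using Nat.strong_induction_on with
  | _ i ih =>
    intro h1 hnd
    rcases lt_or_ge i N with hlt | hge
    · exact hNmin i h1 hlt
    · have hne : i ≠ N := fun h => hnd (h ▸ dvd_refl N)
      have hgt : N < i := lt_of_le_of_ne hge (Ne.symm hne)
      set k := i - N with hk
      have hk1 : 1 ≤ k := Nat.le_sub_of_add_le (by omega)
      have hki : k < i := by omega
      have hknd : ¬ N ∣ k := by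
        intro ⟨c, hc⟩
        exact hnd ⟨c + 1, by rw [Nat.mul_add, Nat.mul_one, ← hc]; omega⟩
      have hk0 : lam k = 0 := ih k hki hk1 hknd
      have h := hpre N k hN1 hk1
      have hNk : N + k = i := by omega
      rw [hNk, hk0] at h
      have hkK : (k : K) ≠ 0 := Nat.cast_ne_zero.mpr (by omega)
      have : -((k : K) * lam N) * lam i = 0 := by
        linear_combination h
      rcases mul_eq_zero.mp this with h' | h' 
      · exact absurd (by
          rcases mul_eq_zero.mp (neg_eq_zero.mp h') with h'' | h''
          · exact absurd h'' hkK
          · exact h'') hNne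
      · exact h'
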